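/- Let K be a field of characteristic 0 and let a, b ∈ K[k] be nonconstant polynomials in k. Then for r ∈ ℤ, gcd(a(k+r), b(k)) ≠ 1 if and only if r is a root of the resultant p(z) = res_k(a(k+z), b(k)) ∈ K[z]. Consequently, shift-equivalence of a and b (existence of r ∈ ℤ with gcd(a(k+r), b(k)) ≠ 1) is decidable via integer roots of p. -/

import Mathlib

/-- The Sylvester matrix of two polynomials `f, g`, with `n` staggered rows of
coefficients of `f` and `m` staggered rows of coefficients of `g`. -/
def sylvesterMatrix {R : Type*} [CommRing R] (m n : ℕ) (f g : Polynomial R) :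
    Matrix (Fin (n + m)) (Fin (n + m)) R :=
  Matrix.of fun i j =>
    if (i : ℕ) < n then
      if (i : ℕ) ≤ (j : ℕ) then f.coeff ((j : ℕ) - (i : ℕ)) else 0
    else
      if (i : ℕ) - n ≤ (j : ℕ) then g.coeff ((j : ℕ) - ((i : ℕ) - n)) else 0

/-- The resultant of two polynomials, as the determinant of their Sylvester matrix. -/
def resultant {R : Type*} [CommRing R] (f g : Polynomial R) : R :=
  (sylvesterMatrix f.natDegree g.natDegree f g).det

open Polynomial Matrix Finset

section MapLemmas

variable {R S : Type*} [CommRing R] [CommRing S]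

lemma sylvesterMatrix_map (φ : R →+* S) (m n : ℕ) (f g : Polynomial R) :
    (sylvesterMatrix m n f g).map φ = sylvesterMatrix m n (f.map φ) (g.map φ) := by
  ext i j
  simp only [sylvesterMatrix, Matrix.map_apply, Matrix.of_apply]
  split_ifs <;> simp [Polynomial.coeff_map]

lemma resultant_map (φ : R →+* S) {f g : Polynomial R}
    (h1 : (f.map φ).natDegree = f.natDegree) (h2 : (g.map φ).natDegree = g.natDegree) :
    _root_.resultant (f.map φ) (g.map φ) = φ (_root_.resultant f g) := by
  unfold _root_.resultant
  rw [h1, h2, RingHom.map_det, RingHom.mapMatrix_apply, sylvesterMatrix_map]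

end MapLemmas

section Field

variable {K : Type*} [Field K]

/-- The polynomial with coefficients given by a vector over `Fin n`. -/
noncomputable def vecPoly (n : ℕ) (c : Fin n → K) : Polynomial K :=
  ∑ p : Fin n, Polynomial.C (c p) * Polynomial.X ^ (p : ℕ)

lemma vecPoly_degree_lt (n : ℕ) (c : Fin n → K) : (vecPoly n c).degree < (n : WithBot ℕ) := by
  refine lt_of_le_of_lt (Polynomial.degree_sum_le _ _) ?_
  rw [Finset.sup_lt_iff (by exact_mod_cast WithBot.bot_lt_coe n)]
  intro p _
  refine lt_of_le_of_lt (Polynomial.degree_C_mul_X_pow_le _ _) ?_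
  exact_mod_cast p.2

lemma vecPoly_coeff (n : ℕ) (c : Fin n → K) (p : Fin n) :
    (vecPoly n c).coeff (p : ℕ) = c p := by
  rw [vecPoly, Polynomial.finset_sum_coeff]
  rw [Finset.sum_eq_single p]
  · simp
  · intro q _ hq
    have : (q : ℕ) ≠ (p : ℕ) := fun h => hq (Fin.ext h)
    rw [Polynomial.coeff_C_mul, Polynomial.coeff_X_pow, if_neg fun h => this h.symm, mul_zero]
  · simp

lemma vecPoly_coeff_eq_self {n : ℕ} {U : Polynomial K} (h : U.degree < (n : WithBot ℕ)) :
    vecPoly n (fun p => U.coeff (p : ℕ)) = U := by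
  by_cases hU : U = 0
  · simp [vecPoly, hU]
  · have hn : U.natDegree < n := (Polynomial.natDegree_lt_iff_degree_lt hU).mpr h
    conv_rhs => rw [U.as_sum_range' n hn]
    rw [vecPoly, ← Fin.sum_univ_eq_sum_range (fun i => Polynomial.monomial i (U.coeff i))]
    exact Finset.sum_congr rfl fun p _ => by rw [Polynomial.C_mul_X_pow_eq_monomial]

lemma vecMul_sylvester_coeff {m n : ℕ} (f g : Polynomial K) (u : Fin (n + m) → K)
    (j : Fin (n + m)) :
    (u ᵥ* sylvesterMatrix m n f g) j =
      ((vecPoly n fun p => u (finSumFinEquiv (Sum.inl p))) * f +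
       (vecPoly m fun q => u (finSumFinEquiv (Sum.inr q))) * g).coeff (j : ℕ) := by
  have lhs : (u ᵥ* sylvesterMatrix m n f g) j =
      ∑ i, u i * sylvesterMatrix m n f g i j := by
    simp [Matrix.vecMul, dotProduct]
  rw [lhs, ← Equiv.sum_comp finSumFinEquiv (fun i => u i * sylvesterMatrix m n f g i j),
    Fintype.sum_sum_type]
  rw [Polynomial.coeff_add, vecPoly, vecPoly, Finset.sum_mul, Finset.sum_mul,
    Polynomial.finset_sum_coeff, Polynomial.finset_sum_coeff]
  congr 1
  · refine Finset.sum_congr rfl fun p _ => ?_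
    have hv : ((finSumFinEquiv (Sum.inl p) : Fin (n + m)) : ℕ) = (p : ℕ) := by simp
    have : Polynomial.C (u (finSumFinEquiv (Sum.inl p))) * Polynomial.X ^ (p : ℕ) * f
        = Polynomial.C (u (finSumFinEquiv (Sum.inl p))) * (f * Polynomial.X ^ (p : ℕ)) := by ring
    rw [this, Polynomial.coeff_C_mul, Polynomial.coeff_mul_X_pow']
    simp only [sylvesterMatrix, Matrix.of_apply, hv, p.2, if_true]
  · refine Finset.sum_congr rfl fun q _ => ?_
    have hv : ((finSumFinEquiv (Sum.inr q) : Fin (n + m)) : ℕ) = n + (q : ℕ) := by simp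
    have : Polynomial.C (u (finSumFinEquiv (Sum.inr q))) * Polynomial.X ^ (q : ℕ) * g
        = Polynomial.C (u (finSumFinEquiv (Sum.inr q))) * (g * Polynomial.X ^ (q : ℕ)) := by ring
    rw [this, Polynomial.coeff_C_mul, Polynomial.coeff_mul_X_pow']
    simp only [sylvesterMatrix, Matrix.of_apply, hv]
    rw [if_neg (by omega), Nat.add_sub_cancel_left]

lemma degree_lt_of_parts {m n : ℕ} {f g U V : Polynomial K}
    (hf : f.natDegree = m) (hg : g.natDegree = n) (hf0 : f ≠ 0) (hg0 : g ≠ 0)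
    (hU : U.degree < (n : WithBot ℕ)) (hV : V.degree < (m : WithBot ℕ)) :
    (U * f + V * g).degree < ((n + m : ℕ) : WithBot ℕ) := by
  have h1 : (U * f).degree < ((n + m : ℕ) : WithBot ℕ) := by
    by_cases hU0 : U = 0
    · rw [hU0, zero_mul, Polynomial.degree_zero]
      exact WithBot.bot_lt_coe _
    · have : (U * f).natDegree < n + m := by
        rw [Polynomial.natDegree_mul hU0 hf0, hf]
        have := (Polynomial.natDegree_lt_iff_degree_lt hU0).mpr hU
        omega
      exact (Polynomial.natDegree_lt_iff_degree_lt (mul_ne_zero hU0 hf0)).mp this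
  have h2 : (V * g).degree < ((n + m : ℕ) : WithBot ℕ) := by
    by_cases hV0 : V = 0
    · rw [hV0, zero_mul, Polynomial.degree_zero]
      exact WithBot.bot_lt_coe _
    · have : (V * g).natDegree < n + m := by
        rw [Polynomial.natDegree_mul hV0 hg0, hg]
        have := (Polynomial.natDegree_lt_iff_degree_lt hV0).mpr hV
        omega
      exact (Polynomial.natDegree_lt_iff_degree_lt (mul_ne_zero hV0 hg0)).mp this
  exact lt_of_le_of_lt (Polynomial.degree_add_le _ _) (max_lt h1 h2)

theorem resultant_eq_zero_iff {f g : Polynomial K}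
    (hf : 0 < f.natDegree) (hg : 0 < g.natDegree) :
    _root_.resultant f g = 0 ↔ ¬ IsCoprime f g := by
  classical
  have hf0 : f ≠ 0 := fun h => by simp [h] at hf
  have hg0 : g ≠ 0 := fun h => by simp [h] at hg
  set m := f.natDegree with hm
  set n := g.natDegree with hn
  constructor
  · intro hdet hcop
    obtain ⟨u, hu0, hu⟩ := Matrix.exists_vecMul_eq_zero_iff.mpr hdet
    set U := vecPoly n fun p => u (finSumFinEquiv (Sum.inl p)) with hUdef
    set V := vecPoly m fun q => u (finSumFinEquiv (Sum.inr q)) with hVdef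
    have hdeg : (U * f + V * g).degree < ((n + m : ℕ) : WithBot ℕ) :=
      degree_lt_of_parts rfl rfl hf0 hg0 (vecPoly_degree_lt _ _) (vecPoly_degree_lt _ _)
    have hzero : U * f + V * g = 0 := by
      ext j
      by_cases hj : j < n + m
      · have h2 := congrFun hu ⟨j, hj⟩
        rw [vecMul_sylvester_coeff] at h2
        rw [Polynomial.coeff_zero]
        exact h2
      · exact Polynomial.coeff_eq_zero_of_degree_lt
          (lt_of_lt_of_le hdeg (by exact_mod_cast Nat.le_of_not_lt hj))
    -- coprimality forces U = 0 and V = 0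
    have hgU : g ∣ U * f := ⟨-V, by linear_combination hzero⟩
    have hU0 : U = 0 := by
      by_contra hU0
      have : g ∣ U := (hcop.symm).dvd_of_dvd_mul_right hgU
      have := Polynomial.natDegree_le_natDegree (Polynomial.degree_le_of_dvd this hU0)
      have hUn := (Polynomial.natDegree_lt_iff_degree_lt hU0).mpr (vecPoly_degree_lt _ _)
      omega
    have hV0 : V = 0 := by
      rw [hU0, zero_mul, zero_add] at hzero
      rcases mul_eq_zero.mp hzero with h | h
      · exact h
      · exact absurd h hg0
    apply hu0
    funext i
    obtain ⟨s, rfl⟩ := finSumFinEquiv.surjective i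
    cases s with
    | inl p =>
      have := vecPoly_coeff n (fun p => u (finSumFinEquiv (Sum.inl p))) p
      rw [← hUdef, hU0] at this
      simpa using this.symm
    | inr q =>
      have := vecPoly_coeff m (fun q => u (finSumFinEquiv (Sum.inr q))) q
      rw [← hVdef, hV0] at this
      simpa using this.symm
  · intro hcop
    have hgcd : ¬ IsUnit (EuclideanDomain.gcd f g) :=
      fun h => hcop (EuclideanDomain.gcd_isUnit_iff.mp h)
    set d := EuclideanDomain.gcd f g with hd
    have hd0 : d ≠ 0 := fun h => hf0 ((EuclideanDomain.gcd_eq_zero_iff.mp h).1)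
    have hdpos : 0 < d.natDegree := by
      rcases Nat.eq_zero_or_pos d.natDegree with h | h
      · exact absurd (Polynomial.isUnit_iff_degree_eq_zero.mpr
          (by rw [Polynomial.degree_eq_natDegree hd0, h]; rfl)) hgcd
      · exact h
    obtain ⟨f', hf'⟩ : d ∣ f := EuclideanDomain.gcd_dvd_left f g
    obtain ⟨g', hg'⟩ : d ∣ g := EuclideanDomain.gcd_dvd_right f g
    have hf'0 : f' ≠ 0 := fun h => hf0 (by rw [hf', h, mul_zero])
    have hg'0 : g' ≠ 0 := fun h => hg0 (by rw [hg', h, mul_zero])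
    have hUdeg : g'.degree < (n : WithBot ℕ) := by
      rw [← Polynomial.natDegree_lt_iff_degree_lt hg'0]
      have : g.natDegree = d.natDegree + g'.natDegree := by
        rw [hg', Polynomial.natDegree_mul hd0 hg'0]
      omega
    have hVdeg : (-f').degree < (m : WithBot ℕ) := by
      rw [← Polynomial.natDegree_lt_iff_degree_lt (neg_ne_zero.mpr hf'0),
        Polynomial.natDegree_neg]
      have : f.natDegree = d.natDegree + f'.natDegree := by
        rw [hf', Polynomial.natDegree_mul hd0 hf'0]
      omega
    have hzero : g' * f + (-f') * g = 0 := by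
      rw [hf', hg']; ring
    rw [_root_.resultant, ← hm, ← hn, ← Matrix.exists_vecMul_eq_zero_iff]
    refine ⟨fun i => Sum.elim (fun p : Fin n => g'.coeff (p : ℕ))
      (fun q : Fin m => (-f').coeff (q : ℕ)) (finSumFinEquiv.symm i), ?_, ?_⟩
    · intro h
      have hUn : g'.natDegree < n := (Polynomial.natDegree_lt_iff_degree_lt hg'0).mpr hUdeg
      have := congrFun h (finSumFinEquiv (Sum.inl ⟨g'.natDegree, hUn⟩))
      simp only [Equiv.symm_apply_apply, Sum.elim_inl, Pi.zero_apply] at this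
      exact Polynomial.leadingCoeff_ne_zero.mpr hg'0 this
    · funext j
      rw [vecMul_sylvester_coeff]
      have e1 : (vecPoly n fun p => Sum.elim (fun p : Fin n => g'.coeff (p : ℕ))
          (fun q : Fin m => (-f').coeff (q : ℕ))
          (finSumFinEquiv.symm (finSumFinEquiv (Sum.inl p)))) = g' := by
        simp only [Equiv.symm_apply_apply, Sum.elim_inl]
        exact vecPoly_coeff_eq_self hUdeg
      have e2 : (vecPoly m fun q => Sum.elim (fun p : Fin n => g'.coeff (p : ℕ))
          (fun q : Fin m => (-f').coeff (q : ℕ))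
          (finSumFinEquiv.symm (finSumFinEquiv (Sum.inr q)))) = -f' := by
        simp only [Equiv.symm_apply_apply, Sum.elim_inr]
        exact vecPoly_coeff_eq_self hVdeg
      rw [e1, e2, hzero]
      simp

end Field

/-- For nonconstant `a, b ∈ K[k]` over a field of characteristic zero and `r ∈ ℤ`,
the shifted polynomial `a(k+r)` has a nontrivial common factor with `b(k)` if and
only if `r` is a root of the resultant `p(z) = res_k(a(k+z), b(k)) ∈ K[z]`. -/
theorem shift_equivalence_via_resultant {K : Type*} [Field K] [CharZero K]
    (a b : Polynomial K) (ha : 0 < a.natDegree) (hb : 0 < b.natDegree) (r : ℤ) :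
    ¬ IsCoprime (a.comp (Polynomial.X + Polynomial.C (r : K))) b ↔
      Polynomial.eval ((r : ℤ) : K)
        (_root_.resultant
          ((a.map (Polynomial.C : K →+* Polynomial K)).comp
            (Polynomial.X + Polynomial.C Polynomial.X))
          (b.map (Polynomial.C : K →+* Polynomial K))) = 0 := by
  set φ : Polynomial K →+* K := Polynomial.evalRingHom ((r : ℤ) : K) with hφ
  have hφC : φ.comp (Polynomial.C : K →+* Polynomial K) = RingHom.id K := by
    ext x; simp [hφ]
  set A : Polynomial (Polynomial K) :=
    (a.map (Polynomial.C : K →+* Polynomial K)).comp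
      (Polynomial.X + Polynomial.C Polynomial.X) with hA
  set B : Polynomial (Polynomial K) := b.map (Polynomial.C : K →+* Polynomial K) with hB
  have hmapA : A.map φ = a.comp (Polynomial.X + Polynomial.C ((r : ℤ) : K)) := by
    rw [hA, Polynomial.map_comp, Polynomial.map_map, hφC, Polynomial.map_id]
    congr 1
    rw [Polynomial.map_add, Polynomial.map_X, Polynomial.map_C]
    simp [hφ]
  have hmapB : B.map φ = b := by
    rw [hB, Polynomial.map_map, hφC, Polynomial.map_id]
  have hAdeg : A.natDegree = a.natDegree := by
    rw [hA, Polynomial.natDegree_comp,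
      Polynomial.natDegree_map_eq_of_injective Polynomial.C_injective,
      Polynomial.natDegree_X_add_C, mul_one]
  have hBdeg : B.natDegree = b.natDegree := by
    rw [hB, Polynomial.natDegree_map_eq_of_injective Polynomial.C_injective]
  have hshiftdeg : (a.comp (Polynomial.X + Polynomial.C ((r : ℤ) : K))).natDegree
      = a.natDegree := by
    rw [Polynomial.natDegree_comp, Polynomial.natDegree_X_add_C, mul_one]
  have heval : Polynomial.eval ((r : ℤ) : K) (_root_.resultant A B)
      = _root_.resultant (a.comp (Polynomial.X + Polynomial.C ((r : ℤ) : K))) b := by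
    rw [← hmapA, ← hmapB]
    rw [resultant_map φ (by rw [hmapA, hshiftdeg, hAdeg]) (by rw [hmapB, hBdeg])]
    rfl
  rw [heval]
  exact (resultant_eq_zero_iff (by rw [hshiftdeg]; exact ha) hb).symm
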